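/- Let X and Y be metric spaces with Y separable and exhaustible by compact sets, and let F be a multi-valued function from X to Y such that F(x) is a nonempty closed subset of Y for every x ∈ X. Then the set {x ∈ X : F is continuous at x} is a Σ⁰₃ subset of X, i.e., it is a countable union of Gδ sets. -/

import Mathlib

/-- A multi-valued function `F : X → Set Y` is continuous at `x`. -/
def MVContinuousAt {X Y : Type*} [MetricSpace X] [MetricSpace Y]
    (F : X → Set Y) (x : X) : Prop :=
  ∃ y ∈ F x, ∀ ε > (0 : ℝ), ∃ δ > (0 : ℝ),
    ∀ x', dist x' x < δ → ∃ y' ∈ F x', dist y y' < ε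

/-- A topological space is exhaustible by compact sets if there is an increasing sequence
of compact sets, each contained in the interior of the next, covering the space. -/
def ExhaustibleByCompacts (Y : Type*) [TopologicalSpace Y] : Prop :=
  ∃ K : ℕ → Set Y, (∀ n, IsCompact (K n)) ∧ (∀ n, K n ⊆ interior (K (n + 1))) ∧
    (⋃ n, K n) = Set.univ

/-- A set is `Σ⁰₃` if it is a countable union of `Gδ` sets. -/
def IsSigma03 {X : Type*} [TopologicalSpace X] (S : Set X) : Prop :=
  ∃ g : ℕ → Set X, (∀ n, IsGδ (g n)) ∧ S = ⋃ n, g n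

theorem points_of_continuity_Sigma03_of_closed_values
    {X Y : Type*} [MetricSpace X] [MetricSpace Y]
    [TopologicalSpace.SeparableSpace Y]
    (hY : ExhaustibleByCompacts Y)
    (F : X → Set Y)
    (hne : ∀ x, (F x).Nonempty)
    (hcl : ∀ x, IsClosed (F x)) :
    IsSigma03 {x : X | MVContinuousAt F x} := by
  obtain ⟨K, hKc, _, hKuniv⟩ := hY
  rcases isEmpty_or_nonempty Y with hYe | hYne
  · refine ⟨fun _ => ∅, fun _ => IsGδ.empty, ?_⟩
    rw [Set.iUnion_empty]
    ext x
    obtain ⟨y, _⟩ := hne x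
    exact isEmptyElim y
  set u := TopologicalSpace.denseSeq Y with hu_def
  have hu : DenseRange u := TopologicalSpace.denseRange_denseSeq Y
  set A : ℕ → ℕ → Set X := fun m n =>
    ⋃ k, ⋃ (_ : ∃ z ∈ K m, dist (u k) z < (1/2 : ℝ)^n),
      interior {x | ∃ y ∈ F x, dist y (u k) < (1/2 : ℝ)^n} with hA_def
  refine ⟨fun m => ⋂ n, A m n, ?_, ?_⟩
  · intro m
    exact IsGδ.iInter_of_isOpen fun n =>
      isOpen_iUnion fun k => isOpen_iUnion fun _ => isOpen_interior
  · ext x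
    simp only [Set.mem_setOf_eq, Set.mem_iUnion, Set.mem_iInter]
    constructor
    · rintro ⟨y, hyF, hy⟩
      have hyU : y ∈ ⋃ n, K n := hKuniv ▸ Set.mem_univ y
      obtain ⟨m, hm⟩ := Set.mem_iUnion.mp hyU
      refine ⟨m, fun n => ?_⟩
      have hpos : (0:ℝ) < (1/2)^(n+1) := by positivity
      have hle : ((1:ℝ)/2)^(n+1) ≤ (1/2)^n :=
        pow_le_pow_of_le_one (by norm_num) (by norm_num) (Nat.le_succ n)
      obtain ⟨k, hk⟩ := Metric.denseRange_iff.mp hu y ((1/2)^(n+1)) hpos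
      obtain ⟨δ, hδ, hδ'⟩ := hy ((1/2)^(n+1)) hpos
      rw [hA_def]
      refine Set.mem_iUnion.mpr ⟨k, Set.mem_iUnion.mpr ⟨⟨y, hm, ?_⟩, ?_⟩⟩
      · rw [dist_comm]; exact lt_of_lt_of_le hk hle
      · rw [mem_interior_iff_mem_nhds, Metric.mem_nhds_iff]
        refine ⟨δ, hδ, fun x' hx' => ?_⟩
        obtain ⟨y', hy'F, hy'd⟩ := hδ' x' (Metric.mem_ball.mp hx')
        refine ⟨y', hy'F, ?_⟩
        calc dist y' (u k) ≤ dist y' y + dist y (u k) := dist_triangle _ _ _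
          _ < (1/2)^(n+1) + (1/2)^(n+1) := by
              rw [dist_comm y' y]; exact add_lt_add hy'd hk
          _ = (1/2)^n := by rw [pow_succ]; ring
    · rintro ⟨m, hA⟩
      have hsel : ∀ n, ∃ k, (∃ z ∈ K m, dist (u k) z < (1/2:ℝ)^n) ∧
          x ∈ interior {x' | ∃ y ∈ F x', dist y (u k) < (1/2:ℝ)^n} := by
        intro n
        have h := hA n
        rw [hA_def] at h
        simp only [Set.mem_iUnion] at h
        obtain ⟨k, hk, hint⟩ := h
        exact ⟨k, hk, hint⟩
      choose k hkz hkint using hsel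
      choose w hwK hwd using hkz
      have hzx : ∀ n, ∃ z ∈ F x, dist z (u (k n)) < (1/2:ℝ)^n := by
        intro n
        have h : x ∈ {x' | ∃ y ∈ F x', dist y (u (k n)) < (1/2:ℝ)^n} :=
          interior_subset (hkint n)
        exact h
      choose z hzF hzd using hzx
      obtain ⟨y, hyK, φ, hφ, hwy⟩ := (hKc m).tendsto_subseq hwK
      have hpow : Filter.Tendsto (fun j => ((1:ℝ)/2)^(φ j)) Filter.atTop (nhds 0) :=
        (tendsto_pow_atTop_nhds_zero_of_lt_one (by norm_num) (by norm_num)).comp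
          hφ.tendsto_atTop
      have hwdist : Filter.Tendsto (fun j => dist (w (φ j)) y) Filter.atTop (nhds 0) :=
        tendsto_iff_dist_tendsto_zero.mp hwy
      have hbnd : ∀ n, dist (u (k n)) y ≤ (1/2:ℝ)^n + dist (w n) y := fun n =>
        le_trans (dist_triangle _ (w n) _) (add_le_add_left (hwd n).le _)
      have hB : Filter.Tendsto (fun j => ((1:ℝ)/2)^(φ j) + dist (w (φ j)) y)
          Filter.atTop (nhds 0) := by
        have := hpow.add hwdist
        simpa using this
      -- z (φ j) → y
      have hzdist : ∀ j, dist (z (φ j)) y ≤ (1/2:ℝ)^(φ j) +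
          ((1/2:ℝ)^(φ j) + dist (w (φ j)) y) := fun j =>
        le_trans (dist_triangle _ (u (k (φ j))) _)
          (add_le_add (hzd (φ j)).le (hbnd (φ j)))
      have hzy : Filter.Tendsto (fun j => z (φ j)) Filter.atTop (nhds y) := by
        refine tendsto_iff_dist_tendsto_zero.mpr ?_
        refine squeeze_zero (fun j => dist_nonneg) hzdist ?_
        have := hpow.add hB
        simpa using this
      have hyF : y ∈ F x :=
        (hcl x).mem_of_tendsto hzy (Filter.Eventually.of_forall fun j => hzF (φ j))
      refine ⟨y, hyF, fun ε hε => ?_⟩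
      have hev : ∀ᶠ j in Filter.atTop,
          ((1:ℝ)/2)^(φ j) + dist (w (φ j)) y < ε/2 :=
        hB.eventually_lt_const (by linarith)
      obtain ⟨j, hj⟩ := hev.exists
      set n := φ j
      have hun : dist (u (k n)) y < ε/2 := lt_of_le_of_lt (hbnd n) hj
      have hpn : ((1:ℝ)/2)^n < ε/2 := by
        have := dist_nonneg (x := w n) (y := y); linarith
      obtain ⟨δ, hδ, hball⟩ := Metric.mem_nhds_iff.mp
        (mem_interior_iff_mem_nhds.mp (hkint n))
      refine ⟨δ, hδ, fun x' hx' => ?_⟩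
      obtain ⟨y', hy'F, hy'd⟩ := hball (Metric.mem_ball.mpr hx')
      refine ⟨y', hy'F, ?_⟩
      calc dist y y' ≤ dist y (u (k n)) + dist (u (k n)) y' := dist_triangle _ _ _
        _ < ε/2 + ε/2 := by
            rw [dist_comm y (u (k n)), dist_comm (u (k n)) y']
            exact add_lt_add hun (lt_trans hy'd hpn)
        _ = ε := by ring
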